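/- Let H be a graph on n vertices that is a crown on n vertices (with any number k of spikes). Then the square H² of H contains a Hamilton cycle. -/

import Mathlib

open scoped Classical

/-- The square of a graph: two distinct vertices are adjacent iff their distance in `H`
is at most two, i.e. they are adjacent in `H` or have a common neighbor. -/
def SimpleGraph.square {V : Type*} (G : SimpleGraph V) : SimpleGraph V where
  Adj u v := u ≠ v ∧ (G.Adj u v ∨ ∃ w, G.Adj u w ∧ G.Adj w v)
  symm := ⟨by
    rintro u v ⟨h1, h2⟩
    refine ⟨h1.symm, ?_⟩
    rcases h2 with h | ⟨w, hw1, hw2⟩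
    · exact Or.inl h.symm
    · exact Or.inr ⟨w, hw2.symm, hw1.symm⟩⟩
  loopless := ⟨fun v h => h.1 rfl⟩

/-- `H` is a crown on its whole (finite) vertex set, with `k` spikes: `H` is the edge-disjoint
union of a cycle `c` and a matching `M` of size `k`, each matching edge having exactly one vertex
in common with the cycle, and every vertex lying on the cycle or on a matching edge. -/
def IsCrown {V : Type*} (H : SimpleGraph V) (k : ℕ) : Prop :=
  ∃ (v : V) (c : H.Walk v v) (M : Finset (Sym2 V)),
    c.IsCycle ∧ M.card = k ∧
    (∀ e ∈ M, ∀ f ∈ M, e ≠ f → ∀ x : V, x ∈ e → x ∉ f) ∧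
    (∀ e ∈ M, e ∉ c.edges) ∧
    (∀ e ∈ M, ∃! x : V, x ∈ e ∧ x ∈ c.support) ∧
    (∀ e : Sym2 V, e ∈ H.edgeSet ↔ (e ∈ c.edges ∨ e ∈ M)) ∧
    (∀ x : V, x ∈ c.support ∨ ∃ e ∈ M, x ∈ e)

namespace CrownAux

open SimpleGraph Walk List

variable {V : Type*} {H : SimpleGraph V}

/-- one step of the expansion: go from `a` to `w`, possibly via the spike of `a`. -/
def step {b : V} (a w : V) (o : Option V)
    (h1 : ∀ s, o = some s → H.square.Adj a s ∧ H.square.Adj s w)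
    (h2 : H.square.Adj a w) (rest : H.square.Walk w b) : H.square.Walk a b :=
  match o, h1 with
  | none, _ => Walk.cons h2 rest
  | some s, h1 => Walk.cons (h1 s rfl).1 (Walk.cons (h1 s rfl).2 rest)

lemma step_support {b : V} (a w : V) (o : Option V) (h1) (h2) (rest : H.square.Walk w b) :
    (step a w o h1 h2 rest).support = a :: (o.toList ++ rest.support) := by
  cases o <;> simp [step]

/-- expand a walk in `H` into a walk in `H.square`, inserting after each vertex `x`
(other than the final one) its spike, if it has one. -/
def expand (spike : V → Option V) (L : List V)
    (hadj : ∀ x s, spike x = some s → H.Adj x s)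
    (hout : ∀ x s, spike x = some s → s ∉ L) :
    ∀ {a b : V}, (p : H.Walk a b) → (∀ x, x ∈ p.support → x ∈ L) → H.square.Walk a b
  | _, _, Walk.nil, _ => Walk.nil
  | a, _, Walk.cons (v := w) h p, hp =>
    step a w (spike a)
      (fun s hs => ⟨⟨(hadj a s hs).ne, Or.inl (hadj a s hs)⟩,
        ⟨fun hsw => hout a s hs (hsw ▸ hp w (by simp)), Or.inr ⟨a, (hadj a s hs).symm, h⟩⟩⟩)
      ⟨h.ne, Or.inl h⟩
      (expand spike L hadj hout p (fun x hx => hp x (by simp [hx])))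

lemma expand_support (spike : V → Option V) (L : List V) (hadj) (hout) :
    ∀ {a b : V} (p : H.Walk a b) (hp),
      (expand (H := H) spike L hadj hout p hp).support
        = (p.support.dropLast.flatMap fun x => x :: (spike x).toList) ++ [b]
  | a, _, Walk.nil, hp => by simp [expand]
  | a, b, Walk.cons (v := w) h p, hp => by
    rw [expand]
    erw [step_support]
    rw [expand_support spike L hadj hout p]
    rw [Walk.support_cons, p.support_eq_cons, List.dropLast_cons₂, List.flatMap_cons,
      ← p.support_eq_cons]
    simp

end CrownAux

namespace CrownAux2
open SimpleGraph Walk List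
variable {V : Type*} [DecidableEq V] {H : SimpleGraph V}

lemma count_flatMap (spike : V → Option V) (y : V) :
    ∀ l : List V, ((l.flatMap fun x => x :: (spike x).toList).count y)
      = l.count y + ((l.map spike).count (some y))
  | [] => by simp
  | x :: l => by
    rw [List.flatMap_cons, List.map_cons, List.count_append, count_flatMap spike y l]
    rcases hx : spike x with _ | s <;>
      by_cases hxy : x = y <;>
      · first
        | (by_cases hsy : s = y <;> simp [List.count_cons, hxy, hsy] <;> omega)
        | (simp [List.count_cons, hxy] <;> omega)

lemma countP_eq_one {α : Type*} {P : α → Bool} {x₀ : α} :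
    ∀ {l : List α}, l.Nodup → x₀ ∈ l → P x₀ → (∀ x ∈ l, P x → x = x₀) → l.countP P = 1
  | [], _, hx, _, _ => by simp at hx
  | a :: l, hl, hx, hP, huniq => by
    rcases List.mem_cons.1 hx with rfl | hx'
    · have h0 : l.countP P = 0 := by
        rw [List.countP_eq_zero]
        intro x hxl hPx
        exact absurd ((huniq x (List.mem_cons_of_mem _ hxl) hPx) ▸ hxl)
          ((List.nodup_cons.1 hl).1)
      rw [List.countP_cons_of_pos hP, h0]
    · have ha : ¬ P a := fun hPa =>
        absurd ((huniq a List.mem_cons_self hPa) ▸ hx')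
          ((List.nodup_cons.1 hl).1 ∘ fun h => h)
      rw [List.countP_cons_of_neg ha]
      exact countP_eq_one (List.nodup_cons.1 hl).2 hx' hP
        (fun x hxl hPx => huniq x (List.mem_cons_of_mem _ hxl) hPx)

lemma not_mem_edges {G : SimpleGraph V} {w v : V} (q : G.Walk w v)
    (hnd : q.support.Nodup) (hl : 2 ≤ q.length) : s(v, w) ∉ q.edges := by
  cases q with
  | nil => simp
  | @cons _ w₂ _ h' q' =>
    intro hmem
    rw [Walk.edges_cons, List.mem_cons] at hmem
    rw [Walk.support_cons, List.nodup_cons] at hnd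
    rcases hmem with heq | hmem'
    · rw [Sym2.eq_iff] at heq
      rcases heq with ⟨rfl, rfl⟩ | ⟨rfl, -⟩
      · exact hnd.1 q'.end_mem_support
      · have : q'.IsPath := Walk.IsPath.mk' hnd.2
        rw [Walk.isPath_iff_eq_nil] at this
        subst this
        simp at hl
    · exact hnd.1 (q'.snd_mem_support_of_mem_edges hmem')

lemma isCycle_of {G : SimpleGraph V} {v : V} (p : G.Walk v v)
    (h3 : 3 ≤ p.length) (hnd : p.support.tail.Nodup) : p.IsCycle := by
  cases p with
  | nil => simp at h3
  | @cons _ w _ h q =>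
    rw [Walk.cons_isCycle_iff]
    have hq : q.support.Nodup := by simpa using hnd
    exact ⟨Walk.IsPath.mk' hq, not_mem_edges q hq (by simp at h3; omega)⟩

end CrownAux2

namespace CrownAux3
open SimpleGraph Walk List CrownAux CrownAux2

lemma count_concat_eq_cons {α : Type*} [DecidableEq α] (l : List α) (a y : α) :
    (l ++ [a]).count y = (a :: l).count y := by
  simp [List.count_append, List.count_cons, Nat.add_comm]

lemma crown_aux {V : Type*} [Fintype V] [DecidableEq V] {H : SimpleGraph V} {v : V}
    (c : H.Walk v v) (hc : c.IsCycle) (spike : V → Option V)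
    (h0 : ∀ x s, spike x = some s → x ∈ c.support)
    (h1 : ∀ x s, spike x = some s → H.Adj x s)
    (h2 : ∀ x s, spike x = some s → s ∉ c.support)
    (h3 : ∀ x x' s, spike x = some s → spike x' = some s → x = x')
    (h4 : ∀ y, y ∉ c.support → ∃ x, spike x = some y) :
    ∃ (w : V) (p : H.square.Walk w w), p.IsHamiltonianCycle := by
  classical
  set p := expand spike c.support h1 h2 c (fun x hx => hx) with hp
  have hsupp : p.support = (c.support.dropLast.flatMap fun x => x :: (spike x).toList) ++ [v] :=
    expand_support spike c.support h1 h2 c _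
  -- basic structure of c.support
  have hT : c.support = v :: c.support.tail := c.support_eq_cons
  have hTnd : c.support.tail.Nodup := hc.support_nodup
  have hlen3 : 3 ≤ c.length := hc.three_le_length
  have hTlen : c.support.tail.length = c.length := by
    have h := c.length_support
    rw [hT, List.length_cons] at h
    omega
  have hTne : c.support.tail ≠ [] := by
    intro h; rw [h] at hTlen; simp at hTlen; omega
  have hsne : c.support ≠ [] := by rw [hT]; simp
  have hconcat : c.support.dropLast ++ [v] = c.support := by
    have := List.dropLast_append_getLast hsne
    rwa [c.getLast_support] at this
  obtain ⟨B', hB', hT'⟩ : ∃ B', c.support.dropLast = v :: B' ∧ c.support.tail = B' ++ [v] := by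
    rcases hBe : c.support.dropLast with _ | ⟨b, B'⟩
    · rw [hBe] at hconcat
      rw [hT] at hconcat
      simp at hconcat
      exact absurd (by rw [← hconcat]; rfl : c.support.tail = []) hTne
    · rw [hBe, hT] at hconcat
      simp at hconcat
      obtain ⟨hb, hB2⟩ := List.cons.inj (hconcat.trans hT)
      exact ⟨B', by rw [hb], hB2.symm⟩
  set B := c.support.dropLast with hB
  have hBnd : B.Nodup := by
    rw [hB', List.nodup_cons]
    have := hTnd
    rw [hT', List.nodup_append] at this
    refine ⟨fun hvmem => this.2.2 v hvmem v (by simp) rfl, this.1⟩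
  have hBmem : ∀ x, x ∈ B ↔ x ∈ c.support := by
    intro x
    rw [hB', hT, hT']
    simp
    tauto
  -- counts in the tail of p.support
  have hflat : (B.flatMap fun x => x :: (spike x).toList)
      = v :: ((spike v).toList ++ (B'.flatMap fun x => x :: (spike x).toList)) := by
    rw [hB']; simp
  have hptail : p.support.tail
      = ((spike v).toList ++ (B'.flatMap fun x => x :: (spike x).toList)) ++ [v] := by
    rw [hsupp, hflat]; simp
  have hcount : ∀ y, p.support.tail.count y = 1 := by
    intro y
    have key : (B.flatMap fun x => x :: (spike x).toList).count y = 1 := by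
      rw [CrownAux2.count_flatMap]
      by_cases hy : y ∈ c.support
      · have hc1 : B.count y = 1 := List.count_eq_one_of_mem hBnd ((hBmem y).2 hy)
        have hc2 : (B.map spike).count (some y) = 0 := by
          rw [List.count_eq_zero]
          intro hmem
          obtain ⟨x, hxB, hxy⟩ := List.mem_map.1 hmem
          exact h2 x y hxy hy
        omega
      · have hc1 : B.count y = 0 := List.count_eq_zero.2 (fun hmem => hy ((hBmem y).1 hmem))
        obtain ⟨x₀, hx₀⟩ := h4 y hy
        have hc2 : (B.map spike).count (some y) = 1 := by
          have hrw : (B.map spike).count (some y) = B.countP (fun x => spike x == some y) := by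
            rw [List.count, List.countP_map]; rfl
          rw [hrw]
          exact countP_eq_one hBnd ((hBmem x₀).2 (h0 x₀ y hx₀)) (by simp [hx₀])
            (fun x hx hPx => h3 x x₀ y (by simpa using hPx) hx₀)
        omega
    rw [hptail, count_concat_eq_cons, ← key, hflat]
  -- nodup and length
  have hnd : p.support.tail.Nodup := List.nodup_iff_count_le_one.2 (fun y => (hcount y).le)
  have hcard3 : 3 ≤ Fintype.card V := le_trans (hTlen ▸ hlen3) hTnd.length_le_card
  have htmem : ∀ y : V, y ∈ p.support.tail := fun y =>
    List.count_pos_iff.1 (by rw [hcount y]; omega)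
  have huniv : p.support.tail.toFinset = Finset.univ :=
    Finset.eq_univ_iff_forall.2 (fun y => List.mem_toFinset.2 (htmem y))
  have htlen : p.support.tail.length = Fintype.card V := by
    rw [← List.toFinset_card_of_nodup hnd, huniv, Finset.card_univ]
  have hplen : 3 ≤ p.length := by
    have h := p.length_support
    rw [p.support_eq_cons, List.length_cons] at h
    omega
  exact ⟨v, p, (Walk.isHamiltonianCycle_iff_isCycle_and_support_count_tail_eq_one).2
    ⟨isCycle_of p hplen hnd, hcount⟩⟩

end CrownAux3

namespace CrownAux4
open SimpleGraph Walk List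

noncomputable def spikeDef {V : Type*} [DecidableEq V] (M : Finset (Sym2 V)) (L : List V)
    (x : V) : Option V :=
  if h : ∃ e, e ∈ M ∧ x ∈ e ∧ x ∈ L then some (Sym2.Mem.other' h.choose_spec.2.1) else none

lemma spikeDef_some {V : Type*} [DecidableEq V] {M : Finset (Sym2 V)} {L : List V} {x s : V}
    (hs : spikeDef M L x = some s) :
    ∃ e, e ∈ M ∧ x ∈ e ∧ x ∈ L ∧ s ∈ e ∧ s(x, s) = e := by
  unfold spikeDef at hs
  split at hs
  · rename_i h
    obtain ⟨he, hxe, hxL⟩ := h.choose_spec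
    injection hs with hs'
    subst hs'
    exact ⟨h.choose, he, hxe, hxL, Sym2.other_mem' _, Sym2.other_spec' _⟩
  · simp at hs

lemma spikeDef_eq {V : Type*} [DecidableEq V] {M : Finset (Sym2 V)} {L : List V}
    (hdisj : ∀ e ∈ M, ∀ f ∈ M, e ≠ f → ∀ x : V, x ∈ e → x ∉ f)
    {x y : V} {e : Sym2 V} (he : e ∈ M) (hxe : x ∈ e) (hxL : x ∈ L) (hye : y ∈ e)
    (hxy : y ≠ x) : spikeDef M L x = some y := by
  have h : ∃ e, e ∈ M ∧ x ∈ e ∧ x ∈ L := ⟨e, he, hxe, hxL⟩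
  unfold spikeDef
  rw [dif_pos h]
  obtain ⟨he', hxe', hxL'⟩ := h.choose_spec
  have hee : h.choose = e := by
    by_contra hne
    exact hdisj h.choose he' e he hne x hxe' hxe
  congr 1
  have hspec := (Sym2.other_spec' h.choose_spec.2.1).trans hee
  rw [← hspec, Sym2.mem_iff] at hye
  rcases hye with rfl | rfl
  · exact absurd rfl hxy
  · rfl

end CrownAux4


/-- If `H` is a crown on its `n` vertices (with any number `k` of spikes), then the square `H²`
of `H` contains a Hamilton cycle. -/
theorem square_of_crown_hamiltonian {V : Type*} [Fintype V] [DecidableEq V]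
    (H : SimpleGraph V) (k : ℕ) (hH : IsCrown H k) :
    ∃ (v : V) (c : H.square.Walk v v), c.IsHamiltonianCycle := by
  classical
  unfold IsCrown at hH
  obtain ⟨v, c, M, hcyc, hcard, hdisj, hnotc, huniq, hedge, hcover⟩ := hH
  set spike := CrownAux4.spikeDef M c.support with hspike
  have hadj : ∀ x s, spike x = some s → H.Adj x s := by
    intro x s hs
    obtain ⟨e, he, hxe, hxL, hse, hxs⟩ := CrownAux4.spikeDef_some hs
    have hm : e ∈ H.edgeSet := (hedge e).2 (Or.inr he)
    rw [← hxs] at hm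
    exact H.mem_edgeSet.1 hm
  have h0 : ∀ x s, spike x = some s → x ∈ c.support := fun x s hs =>
    (CrownAux4.spikeDef_some hs).choose_spec.2.2.1
  have h2 : ∀ x s, spike x = some s → s ∉ c.support := by
    intro x s hs hscon
    obtain ⟨e, he, hxe, hxL, hse, hxs⟩ := CrownAux4.spikeDef_some hs
    obtain ⟨y, hy, hyu⟩ := huniq e he
    have hx' := hyu x ⟨hxe, hxL⟩
    have hs' := hyu s ⟨hse, hscon⟩
    exact (hadj x s hs).ne (hx'.trans hs'.symm)
  have h3 : ∀ x x' s, spike x = some s → spike x' = some s → x = x' := by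
    intro x x' s hs hs'
    obtain ⟨e, he, hxe, hxL, hse, -⟩ := CrownAux4.spikeDef_some hs
    obtain ⟨e', he', hxe', hxL', hse', -⟩ := CrownAux4.spikeDef_some hs'
    have hee : e = e' := by
      by_contra hne
      exact hdisj e he e' he' hne s hse hse'
    subst hee
    obtain ⟨y, hy, hyu⟩ := huniq e he
    exact (hyu x ⟨hxe, hxL⟩).trans (hyu x' ⟨hxe', hxL'⟩).symm
  have h4 : ∀ y, y ∉ c.support → ∃ x, spike x = some y := by
    intro y hy
    rcases hcover y with hy' | ⟨e, he, hye⟩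
    · exact absurd hy' hy
    obtain ⟨x, ⟨hxe, hxs⟩, -⟩ := huniq e he
    have hxy : y ≠ x := fun h => hy (h ▸ hxs)
    exact ⟨x, CrownAux4.spikeDef_eq hdisj he hxe hxs hye hxy⟩
  exact CrownAux3.crown_aux c hcyc spike h0 hadj h2 h3 h4
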